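/- If A is a dense subring of B and P is a minimal prime ideal of A, then there exists a unique minimal prime ideal Q of B such that Q ∩ A = P. -/
import Mathlib


def IsDenseSubring {B : Type*} [CommRing B] (A : Subring B) : Prop :=
  ∀ I : Ideal B, ∀ b ∉ I.radical, ∃ a ∉ I.radical, a * b ∈ A

theorem stmt_8 {B : Type*} [CommRing B] (A : Subring B) (hA : IsDenseSubring A)
    (P : Ideal A) (hP : P ∈ minimalPrimes A) :
    ∃! Q : Ideal B, Q ∈ minimalPrimes B ∧ Q.comap A.subtype = P := by
  have hker : (⊥ : Ideal B).comap A.subtype = ⊥ := by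
    rw [← RingHom.ker_eq_comap_bot]
    exact (RingHom.injective_iff_ker_eq_bot _).mp A.subtype_injective
  have hP' : P ∈ ((⊥ : Ideal B).comap A.subtype).minimalPrimes := by
    rw [hker]; exact hP
  obtain ⟨Q, hQ, hQP⟩ := Ideal.exists_minimalPrimes_comap_eq A.subtype P hP'
  -- uniqueness lemma
  have key : ∀ Q₁ Q₂ : Ideal B, Q₁ ∈ minimalPrimes B → Q₂ ∈ minimalPrimes B →
      Q₁.comap A.subtype = P → Q₂.comap A.subtype = P → Q₁ ≤ Q₂ := by
    intro Q₁ Q₂ h₁ h₂ e₁ e₂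
    have hp₁ : Q₁.IsPrime := h₁.1.1
    have hp₂ : Q₂.IsPrime := h₂.1.1
    intro b hb
    by_contra hbQ₂
    have hb' : b ∉ Q₂.radical := by rwa [hp₂.radical]
    obtain ⟨a, ha, hab⟩ := hA Q₂ b hb'
    have ha' : a ∉ Q₂ := fun h => ha (by rwa [hp₂.radical])
    have habQ₁ : (⟨a * b, hab⟩ : A) ∈ Q₁.comap A.subtype := by
      simpa using Q₁.mul_mem_left a hb
    rw [e₁, ← e₂] at habQ₁
    have : a * b ∈ Q₂ := habQ₁
    rcases hp₂.mem_or_mem this with h | h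
    · exact ha' h
    · exact hbQ₂ h
  refine ⟨Q, ⟨hQ, hQP⟩, ?_⟩
  rintro Q' ⟨hQ', hQ'P⟩
  exact le_antisymm (key Q' Q hQ' hQ hQ'P hQP) (key Q Q' hQ hQ' hQP hQ'P)
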